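/- Let X be a compact metric space and F a closed relation on X. Then F is CR-turbulent if and only if there exists a natural number n ≥ 2 such that the dynamical system (X_F^+, (σ_F^+)^{n-1}) is separated turbulent. -/
import Mathlib


open Set

/-- The n-th Mahavier product of a relation `F` on `X`: tuples `(x 0, …, x n)`
with `(x i, x (i+1)) ∈ F` for all `i < n`. -/
def Mahavier {X : Type*} (F : Set (X × X)) (n : ℕ) : Set (Fin (n + 1) → X) :=
  {x | ∀ i : Fin n, (x i.castSucc, x i.succ) ∈ F}

/-- A witness of CR-turbulence at length parameter `n`. -/
def CRWitness {X : Type*} [TopologicalSpace X] (F : Set (X × X)) (n : ℕ) : Prop :=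
  ∃ K L : Set (Fin (n + 1) → X),
    K.Nonempty ∧ L.Nonempty ∧ IsClosed K ∧ IsClosed L ∧
    K ⊆ Mahavier F n ∧ L ⊆ Mahavier F n ∧ Disjoint K L ∧
    ((fun x => x 0) '' K ∪ (fun x => x 0) '' L) ⊆
      ((fun x => x (Fin.last n)) '' K ∩ (fun x => x (Fin.last n)) '' L)

/-- A witness of reverse CR-turbulence at length parameter `n`. -/
def RevCRWitness {X : Type*} [TopologicalSpace X] (F : Set (X × X)) (n : ℕ) : Prop :=
  ∃ K L : Set (Fin (n + 1) → X),
    K.Nonempty ∧ L.Nonempty ∧ IsClosed K ∧ IsClosed L ∧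
    K ⊆ Mahavier F n ∧ L ⊆ Mahavier F n ∧ Disjoint K L ∧
    ((fun x => x (Fin.last n)) '' K ∪ (fun x => x (Fin.last n)) '' L) ⊆
      ((fun x => x 0) '' K ∩ (fun x => x 0) '' L)

/-- `F` is CR-turbulent. -/
def CRTurbulent {X : Type*} [TopologicalSpace X] (F : Set (X × X)) : Prop :=
  ∃ n : ℕ, 1 ≤ n ∧ CRWitness F n

/-- `F` is reverse CR-turbulent. -/
def RevCRTurbulent {X : Type*} [TopologicalSpace X] (F : Set (X × X)) : Prop :=
  ∃ n : ℕ, 1 ≤ n ∧ RevCRWitness F n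

/-- A self-map is separated turbulent. -/
def SepTurbulent {Z : Type*} [TopologicalSpace Z] (h : Z → Z) : Prop :=
  ∃ K L : Set Z, K.Nonempty ∧ L.Nonempty ∧ IsClosed K ∧ IsClosed L ∧
    Disjoint K L ∧ K ∪ L ⊆ h '' K ∩ h '' L

/-- A self-map is turbulent. -/
def Turbulent {Z : Type*} [TopologicalSpace Z] (h : Z → Z) : Prop :=
  ∃ K L : Set Z, K.Nonempty ∧ L.Nonempty ∧ IsClosed K ∧ IsClosed L ∧
    (K ∩ L).Subsingleton ∧ K ∪ L ⊆ h '' K ∩ h '' L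

/-- The infinite Mahavier product `X_F^+`. -/
def MahavierSeq {X : Type*} (F : Set (X × X)) : Set (ℕ → X) :=
  {x | ∀ i : ℕ, (x i, x (i + 1)) ∈ F}

/-- The shift map `σ_F^+` on `X_F^+`. -/
def shiftMap {X : Type*} (F : Set (X × X)) : MahavierSeq F → MahavierSeq F :=
  fun x => ⟨fun n => x.1 (n + 1), fun i => x.2 (i + 1)⟩

section lems
variable {X : Type*} [TopologicalSpace X] {F : Set (X × X)}

omit [TopologicalSpace X] in
lemma shift_iter (x : MahavierSeq F) (k i : ℕ) :
    ((shiftMap F)^[k] x).1 i = x.1 (i + k) := by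
  induction k generalizing x i with
  | zero => rfl
  | succ k ih =>
    rw [Function.iterate_succ_apply, ih (shiftMap F x) i]
    show x.1 (i + k + 1) = x.1 (i + (k+1))
    ring_nf

lemma mahavierSeq_isClosed (hF : IsClosed F) : IsClosed (MahavierSeq F) := by
  have : MahavierSeq F = ⋂ i : ℕ, (fun x : ℕ → X => (x i, x (i+1))) ⁻¹' F := by
    ext x; simp [MahavierSeq]
  rw [this]
  exact isClosed_iInter fun i =>
    hF.preimage (((continuous_apply i).prodMk (continuous_apply (i+1))))

end lems

private theorem fwd {X : Type*} [MetricSpace X] [CompactSpace X] {F : Set (X × X)}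
    (hF : IsClosed F) (h : CRTurbulent F) :
    ∃ n : ℕ, 2 ≤ n ∧ SepTurbulent ((shiftMap F)^[n - 1]) := by
  obtain ⟨n, hn1, K, L, hKne, hLne, hKc, hLc, hKM, hLM, hdisj, hsub⟩ := h
  classical
  set blk : ℕ → (ℕ → X) → (Fin (n+1) → X) := fun j x i => x (j*n + i) with hblkdef
  have blk_cont : ∀ j, Continuous (blk j) :=
    fun j => continuous_pi fun i => continuous_apply _
  set B := K ∪ L with hB
  have hBM : B ⊆ Mahavier F n := union_subset hKM hLM
  have hBc : IsClosed B := hKc.union hLc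
  -- membership in MahavierSeq from blocks
  have mem_seq : ∀ x : ℕ → X, (∀ j, blk j x ∈ Mahavier F n) → x ∈ MahavierSeq F := by
    intro x hx i
    have hr : i % n < n := Nat.mod_lt _ (by omega)
    have hi : i = (i / n) * n + i % n := (Nat.div_add_mod' i n).symm
    have := hx (i / n) ⟨i % n, hr⟩
    simpa [Mahavier, blk, Fin.succ, ← hi, ← Nat.add_assoc] using this
  -- extension property from hsub
  have hext : ∀ y ∈ B, (∃ c ∈ K, c (Fin.last n) = y 0) ∧ (∃ c ∈ L, c (Fin.last n) = y 0) := by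
    intro y hy
    have : y 0 ∈ ((fun x => x 0) '' K ∪ (fun x => x 0) '' L) := by
      rcases hy with hy | hy
      · exact Or.inl ⟨y, hy, rfl⟩
      · exact Or.inr ⟨y, hy, rfl⟩
    obtain ⟨⟨c, hc, hceq⟩, ⟨c', hc', hceq'⟩⟩ := hsub this
    exact ⟨⟨c, hc, hceq⟩, ⟨c', hc', hceq'⟩⟩
  -- finite backward chains
  have chain : ∀ A : Set (Fin (n+1) → X), A ⊆ B → A.Nonempty →
      (∀ y ∈ B, ∃ c ∈ A, c (Fin.last n) = y 0) →
      ∀ m : ℕ, ∃ b : ℕ → (Fin (n+1) → X),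
      b 0 ∈ A ∧ (∀ j, b j ∈ B) ∧ ∀ j < m, b j (Fin.last n) = b (j+1) 0 := by
    intro A hAB ⟨b₀, hb₀⟩ hAext m
    induction m with
    | zero => exact ⟨fun _ => b₀, hb₀, fun _ => hAB hb₀, by omega⟩
    | succ m ih =>
      obtain ⟨b, hb0, hbB, hlink⟩ := ih
      obtain ⟨c, hc, hceq⟩ := hAext (b 0) (hbB 0)
      refine ⟨fun j => Nat.casesOn j c (fun j' => b j'), hc, ?_, ?_⟩
      · intro j; cases j with
        | zero => exact hAB hc
        | succ j' => exact hbB j'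
      · intro j hj
        cases j with
        | zero => exact hceq
        | succ j' => exact hlink j' (by omega)
  -- assemble a sequence from a chain
  have hseq_of_chain : ∀ m : ℕ, ∀ b : ℕ → (Fin (n+1) → X),
      (∀ j < m, b j (Fin.last n) = b (j+1) 0) →
      ∃ x : ℕ → X, ∀ j < m, blk j x = b j := by
    intro m b hlink
    refine ⟨fun i => b (i / n) ⟨i % n, by have := Nat.mod_lt i (show 0 < n by omega); omega⟩, ?_⟩
    intro j hj
    funext i
    show b ((j*n + i.val) / n) ⟨(j*n + i.val) % n, _⟩ = b j i
    rcases lt_or_eq_of_le (Nat.lt_succ_iff.mp i.isLt) with hi | hi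
    · have h1 : (j*n + i.val) / n = j := by
        rw [Nat.add_comm, Nat.add_mul_div_right _ _ (by omega : 0 < n),
          Nat.div_eq_of_lt hi, Nat.zero_add]
      have h2 : (j*n + i.val) % n = i.val := by
        rw [Nat.add_comm, Nat.add_mul_mod_self_right, Nat.mod_eq_of_lt hi]
      rw [h1]
      congr 1
      exact Fin.ext h2
    · have h1 : (j*n + i.val) / n = j + 1 := by
        rw [hi, show j*n + n = (j+1)*n by ring, Nat.mul_div_cancel _ (by omega : 0 < n)]
      have h2 : (j*n + i.val) % n = 0 := by
        rw [hi, show j*n + n = (j+1)*n by ring]; exact Nat.mul_mod_left _ _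
      have hlast : i = Fin.last n := Fin.ext hi
      have h3 : b j i = b (j+1) 0 := by rw [hlast]; exact hlink j hj
      rw [h1, h3]
      congr 1
      exact Fin.ext (by simpa using h2)
  -- general nonemptiness and closedness for the candidate sets
  have key_ne : ∀ A : Set (Fin (n+1) → X), A ⊆ B → A.Nonempty →
      (∀ y ∈ B, ∃ c ∈ A, c (Fin.last n) = y 0) → IsClosed A →
      {x : ℕ → X | blk 0 x ∈ A ∧ ∀ j, blk j x ∈ B}.Nonempty := by
    intro A hAB hAne hAext hAc
    set Cs : ℕ → Set (ℕ → X) := fun m => {x | blk 0 x ∈ A ∧ ∀ j < m, blk j x ∈ B} with hCs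
    have hCclosed : ∀ m, IsClosed (Cs m) := by
      intro m
      have : Cs m = (blk 0)⁻¹' A ∩ ⋂ j, ⋂ (_ : j < m), (blk j)⁻¹' B := by
        ext x; simp [hCs, mem_iInter]
      rw [this]
      exact (hAc.preimage (blk_cont 0)).inter
        (isClosed_iInter fun j => isClosed_iInter fun _ => hBc.preimage (blk_cont j))
    have hCne : ∀ m, (Cs m).Nonempty := by
      intro m
      obtain ⟨b, hb0, hbB, hlink⟩ := chain A hAB hAne hAext (m+1)
      obtain ⟨x, hx⟩ := hseq_of_chain (m+1) b hlink
      refine ⟨x, ?_, ?_⟩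
      · rw [hx 0 (by omega)]; exact hb0
      · intro j hj; rw [hx j (by omega)]; exact hbB j
    have hKKeq : {x : ℕ → X | blk 0 x ∈ A ∧ ∀ j, blk j x ∈ B} = ⋂ m, Cs m := by
      ext x
      simp only [hCs, mem_iInter, mem_setOf_eq]
      constructor
      · rintro ⟨h0, hB'⟩ m; exact ⟨h0, fun j _ => hB' j⟩
      · intro h; exact ⟨(h 0).1, fun j => (h (j+1)).2 j (by omega)⟩
    rw [hKKeq]
    exact IsCompact.nonempty_iInter_of_sequence_nonempty_isCompact_isClosed Cs
      (fun m => fun x hx => ⟨hx.1, fun j hj => hx.2 j (by omega)⟩) hCne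
      ((hCclosed 0).isCompact) hCclosed
  have key_cl : ∀ A : Set (Fin (n+1) → X), IsClosed A →
      IsClosed {x : ℕ → X | blk 0 x ∈ A ∧ ∀ j, blk j x ∈ B} := by
    intro A hAc
    have : {x : ℕ → X | blk 0 x ∈ A ∧ ∀ j, blk j x ∈ B}
        = (blk 0)⁻¹' A ∩ ⋂ j, (blk j)⁻¹' B := by
      ext x; simp [mem_iInter]
    rw [this]
    exact (hAc.preimage (blk_cont 0)).inter
      (isClosed_iInter fun j => hBc.preimage (blk_cont j))
  -- the candidate sets in the sequence space
  set KK : Set (ℕ → X) := {x | blk 0 x ∈ K ∧ ∀ j, blk j x ∈ B} with hKK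
  set LL : Set (ℕ → X) := {x | blk 0 x ∈ L ∧ ∀ j, blk j x ∈ B} with hLL
  have hKKclosed : IsClosed KK := key_cl K hKc
  have hLLclosed : IsClosed LL := key_cl L hLc
  have hKKne : KK.Nonempty :=
    key_ne K subset_union_left hKne (fun y hy => (hext y hy).1) hKc
  have hLLne : LL.Nonempty :=
    key_ne L subset_union_right hLne (fun y hy => (hext y hy).2) hLc
  have hKKseq : KK ⊆ MahavierSeq F := fun x hx => mem_seq x fun j => hBM (hx.2 j)
  have hLLseq : LL ⊆ MahavierSeq F := fun x hx => mem_seq x fun j => hBM (hx.2 j)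
  -- prepend lemma
  have prepend : ∀ x : ℕ → X, ∀ c : Fin (n+1) → X, c (Fin.last n) = x 0 →
      ∃ y : ℕ → X, blk 0 y = c ∧ (∀ j, blk (j+1) y = blk j x) ∧ ∀ i, y (i + n) = x i := by
    intro x c hc
    refine ⟨fun i => if h : i < n then c ⟨i, by omega⟩ else x (i - n), ?_, ?_, ?_⟩
    · funext i
      show (if h : 0*n + i.val < n then c ⟨0*n + i.val, _⟩ else x (0*n + i.val - n)) = c i
      rcases lt_or_eq_of_le (Nat.lt_succ_iff.mp i.isLt) with hi | hi
      · rw [dif_pos (by omega)]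
        congr 1
        exact Fin.ext (by simp)
      · rw [dif_neg (by omega)]
        have : (0*n + i.val - n) = 0 := by omega
        rw [this, ← hc]
        congr 1
        exact Fin.ext (by simp [hi])
    · intro j
      funext i
      show (if h : (j+1)*n + i.val < n then c ⟨(j+1)*n + i.val, _⟩
        else x ((j+1)*n + i.val - n)) = x (j*n + i.val)
      have hge : ¬ ((j+1)*n + i.val < n) := by
        have : n ≤ (j+1)*n := Nat.le_mul_of_pos_left n (by omega)
        omega
      rw [dif_neg hge]
      congr 1
      have : (j+1)*n = j*n + n := by ring
      omega
    · intro i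
      show (if h : i + n < n then _ else x (i + n - n)) = x i
      rw [dif_neg (by omega)]
      congr 1
      omega
  -- final assembly
  refine ⟨n + 1, by omega, ?_⟩
  have hiter : n + 1 - 1 = n := by omega
  rw [hiter]
  refine ⟨Subtype.val ⁻¹' KK, Subtype.val ⁻¹' LL, ?_, ?_, ?_, ?_, ?_, ?_⟩
  · obtain ⟨x, hx⟩ := hKKne
    exact ⟨⟨x, hKKseq hx⟩, hx⟩
  · obtain ⟨x, hx⟩ := hLLne
    exact ⟨⟨x, hLLseq hx⟩, hx⟩
  · exact hKKclosed.preimage continuous_subtype_val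
  · exact hLLclosed.preimage continuous_subtype_val
  · rw [Set.disjoint_left]
    rintro x ⟨hx1, -⟩ ⟨hx2, -⟩
    exact Set.disjoint_left.mp hdisj hx1 hx2
  · rintro x hx
    have hxB : ∀ j, blk j x.1 ∈ B := by
      rcases hx with hx | hx
      · exact hx.2
      · exact hx.2
    have hx0 : x.1 0 = (blk 0 x.1) 0 := by simp [hblkdef]
    obtain ⟨⟨c, hcK, hceq⟩, ⟨c', hcL, hceq'⟩⟩ := hext (blk 0 x.1) (hxB 0)
    constructor
    · obtain ⟨y, hy0, hyj, hysh⟩ := prepend x.1 c (by rw [hceq, hx0])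
      have hyKK : y ∈ KK := by
        refine ⟨by rw [hy0]; exact hcK, ?_⟩
        intro j
        cases j with
        | zero => rw [hy0]; exact Or.inl hcK
        | succ j => rw [hyj j]; exact hxB j
      refine ⟨⟨y, hKKseq hyKK⟩, hyKK, ?_⟩
      apply Subtype.ext
      funext i
      rw [shift_iter]
      exact hysh i
    · obtain ⟨y, hy0, hyj, hysh⟩ := prepend x.1 c' (by rw [hceq', hx0])
      have hyLL : y ∈ LL := by
        refine ⟨by rw [hy0]; exact hcL, ?_⟩
        intro j
        cases j with
        | zero => rw [hy0]; exact Or.inr hcL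
        | succ j => rw [hyj j]; exact hxB j
      refine ⟨⟨y, hLLseq hyLL⟩, hyLL, ?_⟩
      apply Subtype.ext
      funext i
      rw [shift_iter]
      exact hysh i

private theorem bwd {X : Type*} [MetricSpace X] [CompactSpace X] {F : Set (X × X)}
    (hF : IsClosed F) (h : ∃ n : ℕ, 2 ≤ n ∧ SepTurbulent ((shiftMap F)^[n - 1])) :
    CRTurbulent F := by
  obtain ⟨N, hN2, K, L, hKne, hLne, hKc, hLc, hdisj, hsub⟩ := h
  set m := N - 1 with hm
  have hm1 : 1 ≤ m := by omega
  set σ := (shiftMap F)^[m] with hσ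
  haveI : CompactSpace (MahavierSeq F) :=
    isCompact_iff_compactSpace.mp (mahavierSeq_isClosed hF).isCompact
  -- find a separating length M
  have hsep : ∃ M : ℕ, ∀ x ∈ K, ∀ y ∈ L, ∃ i ≤ M, (x : ℕ → X) i ≠ (y : ℕ → X) i := by
    by_contra hcon
    push_neg at hcon
    set S : ℕ → Set (↥(MahavierSeq F) × ↥(MahavierSeq F)) :=
      fun M => {p | p.1 ∈ K ∧ p.2 ∈ L ∧ ∀ i ≤ M, p.1.1 i = p.2.1 i} with hS
    have hSne : ∀ M, (S M).Nonempty := by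
      intro M
      obtain ⟨x, hx, y, hy, hxy⟩ := hcon M
      exact ⟨(x, y), hx, hy, hxy⟩
    have hSclosed : ∀ M, IsClosed (S M) := by
      intro M
      have : S M = (Prod.fst ⁻¹' K) ∩ (Prod.snd ⁻¹' L) ∩
          ⋂ i, ⋂ (_ : i ≤ M), {p : ↥(MahavierSeq F) × ↥(MahavierSeq F) | p.1.1 i = p.2.1 i} := by
        ext p; simp [hS, mem_iInter]; tauto
      rw [this]
      refine ((hKc.preimage continuous_fst).inter (hLc.preimage continuous_snd)).inter
        (isClosed_iInter fun i => isClosed_iInter fun _ => ?_)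
      exact isClosed_eq
        (((continuous_apply i).comp continuous_subtype_val).comp continuous_fst)
        (((continuous_apply i).comp continuous_subtype_val).comp continuous_snd)
    have hSdec : ∀ M, S (M+1) ⊆ S M := by
      rintro M p ⟨h1, h2, h3⟩
      exact ⟨h1, h2, fun i hi => h3 i (by omega)⟩
    obtain ⟨p, hp⟩ := IsCompact.nonempty_iInter_of_sequence_nonempty_isCompact_isClosed S
      hSdec hSne ((hSclosed 0).isCompact) hSclosed
    simp only [mem_iInter] at hp
    have hpeq : p.1 = p.2 := by
      apply Subtype.ext
      funext i
      exact ((hp i).2.2) i (le_refl i)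
    exact Set.disjoint_left.mp hdisj (hp 0).1 (hpeq ▸ (hp 0).2.1)
  obtain ⟨M, hM⟩ := hsep
  -- iterate inclusion
  have iter_sub : ∀ k : ℕ, K ∪ L ⊆ (σ^[k+1]) '' K ∩ (σ^[k+1]) '' L := by
    intro k
    induction k with
    | zero => simpa using hsub
    | succ k ih =>
      intro x hx
      obtain ⟨hx1, hx2⟩ := hsub hx
      constructor
      · obtain ⟨y, hy, rfl⟩ := hx1
        obtain ⟨z, hz, hzeq⟩ := (ih (Or.inl hy)).1
        exact ⟨z, hz, by rw [Function.iterate_succ_apply', hzeq]⟩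
      · obtain ⟨y, hy, rfl⟩ := hx2
        obtain ⟨z, hz, hzeq⟩ := (ih (Or.inr hy)).2
        exact ⟨z, hz, by rw [Function.iterate_succ_apply', hzeq]⟩
  set N' := m * (M + 1) with hN'
  have hN'M : M + 1 ≤ N' := Nat.le_mul_of_pos_left _ (by omega)
  have hiter : ∀ x : ↥(MahavierSeq F), σ^[M+1] x = (shiftMap F)^[N'] x := by
    intro x
    rw [hσ, hN', Function.iterate_mul]
  -- truncation
  set trunc : ↥(MahavierSeq F) → (Fin (N'+1) → X) := fun x i => x.1 i with htr
  have htrc : Continuous trunc :=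
    continuous_pi fun i => (continuous_apply _).comp continuous_subtype_val
  refine ⟨N', by omega, trunc '' K, trunc '' L, hKne.image _, hLne.image _,
    (hKc.isCompact.image htrc).isClosed, (hLc.isCompact.image htrc).isClosed,
    ?_, ?_, ?_, ?_⟩
  · rintro _ ⟨x, hx, rfl⟩ i
    have := x.2 i.val
    simpa [htr] using this
  · rintro _ ⟨x, hx, rfl⟩ i
    have := x.2 i.val
    simpa [htr] using this
  · rw [Set.disjoint_left]
    rintro _ ⟨x, hx, rfl⟩ ⟨y, hy, heq⟩
    obtain ⟨i, hiM, hne⟩ := hM x hx y hy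
    exact hne (congrFun heq ⟨i, by omega⟩).symm
  · rintro a (⟨t, ⟨x, hx, rfl⟩, rfl⟩ | ⟨t, ⟨x, hx, rfl⟩, rfl⟩)
    · obtain ⟨⟨y, hy, hyeq⟩, ⟨z, hz, hzeq⟩⟩ := iter_sub M (Or.inl hx)
      constructor
      · refine ⟨trunc y, ⟨y, hy, rfl⟩, ?_⟩
        show y.1 N' = x.1 0
        have heq2 : (shiftMap F)^[N'] y = x := by rw [← hiter]; exact hyeq
        rw [← heq2, shift_iter, Nat.zero_add]
      · refine ⟨trunc z, ⟨z, hz, rfl⟩, ?_⟩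
        show z.1 N' = x.1 0
        have heq2 : (shiftMap F)^[N'] z = x := by rw [← hiter]; exact hzeq
        rw [← heq2, shift_iter, Nat.zero_add]
    · obtain ⟨⟨y, hy, hyeq⟩, ⟨z, hz, hzeq⟩⟩ := iter_sub M (Or.inr hx)
      constructor
      · refine ⟨trunc y, ⟨y, hy, rfl⟩, ?_⟩
        show y.1 N' = x.1 0
        have heq2 : (shiftMap F)^[N'] y = x := by rw [← hiter]; exact hyeq
        rw [← heq2, shift_iter, Nat.zero_add]
      · refine ⟨trunc z, ⟨z, hz, rfl⟩, ?_⟩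
        show z.1 N' = x.1 0
        have heq2 : (shiftMap F)^[N'] z = x := by rw [← hiter]; exact hzeq
        rw [← heq2, shift_iter, Nat.zero_add]

theorem stmt0 {X : Type*} [MetricSpace X] [CompactSpace X] {F : Set (X × X)}
    (hF : IsClosed F) :
    CRTurbulent F ↔ ∃ n : ℕ, 2 ≤ n ∧ SepTurbulent ((shiftMap F)^[n - 1]) :=
  ⟨fwd hF, bwd hF⟩
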